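/- Let $(X, \mu)$ be a measure space, $\Psi : X \to [-\infty, -t_0]$ measurable for some $t_0 \in \mathbb{R}$, $h : X \to [0, +\infty]$ measurable, and $q > 1$, $C \ge 0$ constants. Suppose that for all $t \ge t_0$ one has $\int_{\{q\Psi < -qt\}} h \, d\mu \ge e^{-qt + qt_0} C$. Then $\int_X h \, e^{-\Psi} \, d\mu \ge \frac{q}{q-1} e^{t_0} C$. -/

import Mathlib

open MeasureTheory Set
open scoped ENNReal

/-- If `Ψ ≤ -t₀` and `∫_{{Ψ < -t}} h dμ ≥ e^{-qt + qt₀} C` for all `t ≥ t₀`, with `q > 1`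
and `C ≥ 0`, then `∫ h e^{-Ψ} dμ ≥ (q/(q-1)) e^{t₀} C`. -/
theorem lower_bound_exp_integral {X : Type*} [MeasurableSpace X] (μ : Measure X)
    (t₀ : ℝ) (Ψ : X → EReal) (hΨm : Measurable Ψ) (hΨ : ∀ x, Ψ x ≤ (↑(-t₀) : EReal))
    (h : X → ENNReal) (hh : Measurable h)
    (q C : ℝ) (hq : 1 < q) (hC : 0 ≤ C)
    (hlow : ∀ t : ℝ, t₀ ≤ t →
      ENNReal.ofReal (Real.exp (-q * t + q * t₀) * C) ≤
        ∫⁻ x in {x : X | (q : EReal) * Ψ x < (↑(-(q * t)) : EReal)}, h x ∂μ) :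
    ENNReal.ofReal (q / (q - 1) * Real.exp t₀ * C) ≤
      ∫⁻ x, h x * EReal.exp (-(Ψ x)) ∂μ := by
  set a : ℝ := Real.exp t₀ with ha_def
  have ha_pos : 0 < a := Real.exp_pos t₀
  have hq0 : (0:ℝ) < q := lt_trans one_pos hq
  set ν : Measure X := μ.withDensity h with hν_def
  have hexp_m : Measurable fun x => EReal.exp (-(Ψ x)) :=
    EReal.exp_monotone.measurable.comp hΨm.neg
  have hint : ∫⁻ x, h x * EReal.exp (-(Ψ x)) ∂μ = ∫⁻ x, EReal.exp (-(Ψ x)) ∂ν := by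
    rw [hν_def, lintegral_withDensity_eq_lintegral_mul μ hh hexp_m]; rfl
  rw [hint]
  -- the bottom set
  set N : Set X := {x | Ψ x = ⊥} with hN_def
  have hNmeas : MeasurableSet N := hΨm (measurableSet_singleton ⊥)
  -- key measure lower bound
  have key : ∀ t : ℝ, t₀ ≤ t → ENNReal.ofReal (Real.exp (-q * t + q * t₀) * C)
      ≤ ν {x | Ψ x < ((-t : ℝ) : EReal)} := by
    intro t ht
    have hsub : {x : X | (q : EReal) * Ψ x < (↑(-(q * t)) : EReal)}
        ⊆ {x | Ψ x < ((-t : ℝ) : EReal)} := by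
      intro x hx
      by_contra hcon
      simp only [Set.mem_setOf_eq, not_lt] at hcon hx
      refine absurd hx (not_lt.mpr ?_)
      calc (↑(-(q * t)) : EReal) = (q : EReal) * ((-t : ℝ) : EReal) := by
            rw [← EReal.coe_mul]; norm_num
        _ ≤ (q : EReal) * Ψ x := mul_le_mul_of_nonneg_left hcon (by exact_mod_cast hq0.le)
    calc ENNReal.ofReal (Real.exp (-q * t + q * t₀) * C)
        ≤ ∫⁻ x in {x : X | (q : EReal) * Ψ x < (↑(-(q * t)) : EReal)}, h x ∂μ := hlow t ht
      _ ≤ ∫⁻ x in {x | Ψ x < ((-t : ℝ) : EReal)}, h x ∂μ := lintegral_mono_set hsub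
      _ = ν {x | Ψ x < ((-t : ℝ) : EReal)} :=
          (withDensity_apply h (hΨm measurableSet_Iio)).symm
  by_cases hνN : ν N = 0
  swap
  · -- infinite integral case
    refine le_top.trans_eq ?_
    rw [eq_comm, eq_top_iff]
    calc (⊤ : ℝ≥0∞) = ⊤ * ν N := (ENNReal.top_mul hνN).symm
      _ = ∫⁻ _ in N, ⊤ ∂ν := (setLIntegral_const N ⊤).symm
      _ = ∫⁻ x in N, EReal.exp (-(Ψ x)) ∂ν := by
          refine (setLIntegral_congr_fun hNmeas (fun x hx => ?_)).symm
          rw [show Ψ x = ⊥ from hx, EReal.neg_bot, EReal.exp_top]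
      _ ≤ ∫⁻ x, EReal.exp (-(Ψ x)) ∂ν := setLIntegral_le_lintegral _ _
  -- main case: Ψ a.e. finite
  set f : X → ℝ := fun x => (EReal.exp (-(Ψ x))).toReal with hf_def
  have hf_meas : Measurable f := hexp_m.ennreal_toReal
  have hf_nn : 0 ≤ᵐ[ν] f := ae_of_all _ fun x => ENNReal.toReal_nonneg
  have hne_top : ∀ x, Ψ x ≠ ⊥ → EReal.exp (-(Ψ x)) ≠ ⊤ := by
    intro x hx
    simp [EReal.exp_eq_top_iff, EReal.neg_eq_top_iff, hx]
  have hae : ∀ᵐ x ∂ν, EReal.exp (-(Ψ x)) = ENNReal.ofReal (f x) := by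
    refine measure_mono_null (fun x hx => ?_) hνN
    simp only [Set.mem_setOf_eq, ae_iff, Set.mem_compl_iff] at hx ⊢
    by_contra hx'
    exact hx ((ENNReal.ofReal_toReal (hne_top x hx')).symm)
  rw [lintegral_congr_ae hae, lintegral_eq_lintegral_meas_lt ν hf_nn hf_meas.aemeasurable]
  -- the inclusion lemma
  have lem : ∀ s t : ℝ, 0 ≤ s → s ≤ Real.exp t →
      {x | Ψ x < ((-t : ℝ) : EReal)} \ N ⊆ {x | s < f x} := by
    intro s t hs hst x hx
    obtain ⟨hx1, hx2⟩ := hx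
    simp only [Set.mem_setOf_eq] at hx1 ⊢
    have hxN : Ψ x ≠ ⊥ := hx2
    have h1 : (t : EReal) < -(Ψ x) := by
      refine EReal.lt_neg_of_lt_neg ?_
      rwa [← EReal.coe_neg]
    have h2 : ENNReal.ofReal s < EReal.exp (-(Ψ x)) := by
      calc ENNReal.ofReal s ≤ ENNReal.ofReal (Real.exp t) := ENNReal.ofReal_le_ofReal hst
        _ = EReal.exp (t : EReal) := (EReal.exp_coe t).symm
        _ < EReal.exp (-(Ψ x)) := EReal.exp_lt_exp_iff.mpr h1
    exact (ENNReal.ofReal_lt_iff_lt_toReal hs (hne_top x hxN)).mp h2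
  have keyN : ∀ t : ℝ, t₀ ≤ t → ENNReal.ofReal (Real.exp (-q * t + q * t₀) * C)
      ≤ ν ({x | Ψ x < ((-t : ℝ) : EReal)} \ N) := by
    intro t ht
    rw [measure_diff_null hνN]
    exact key t ht
  -- split the integral
  have hsplit : Ioi (0:ℝ) = Ioo 0 a ∪ Ici a := (Set.Ioo_union_Ici_eq_Ioi ha_pos).symm
  have hdisj : Disjoint (Ioo (0:ℝ) a) (Ici a) := by
    rw [Set.disjoint_left]; rintro s ⟨_, h2⟩ h3; exact absurd h3 (not_le.mpr h2)
  rw [hsplit, lintegral_union measurableSet_Ici hdisj]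
  -- piece 1
  have p1 : ENNReal.ofReal (a * C) ≤ ∫⁻ s in Ioo (0:ℝ) a, ν {x | s < f x} := by
    have hb : ∀ s ∈ Ioo (0:ℝ) a, ENNReal.ofReal C ≤ ν {x | s < f x} := by
      intro s hs
      calc ENNReal.ofReal C = ENNReal.ofReal (Real.exp (-q * t₀ + q * t₀) * C) := by
            norm_num
        _ ≤ ν ({x | Ψ x < ((-t₀ : ℝ) : EReal)} \ N) := keyN t₀ le_rfl
        _ ≤ ν {x | s < f x} := measure_mono (lem s t₀ hs.1.le hs.2.le)
    calc ENNReal.ofReal (a * C) = ENNReal.ofReal C * volume (Ioo (0:ℝ) a) := by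
          rw [Real.volume_Ioo, ← ENNReal.ofReal_mul hC]
          rw [mul_comm a C]; norm_num
      _ = ∫⁻ _ in Ioo (0:ℝ) a, ENNReal.ofReal C := (setLIntegral_const _ _).symm
      _ ≤ ∫⁻ s in Ioo (0:ℝ) a, ν {x | s < f x} := setLIntegral_mono' measurableSet_Ioo hb
  -- piece 2
  have p2 : ENNReal.ofReal (a * C / (q - 1)) ≤ ∫⁻ s in Ici a, ν {x | s < f x} := by
    set K : ℝ := Real.exp (q * t₀) * C with hK_def
    have hK_nn : 0 ≤ K := mul_nonneg (Real.exp_nonneg _) hC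
    have hb : ∀ s ∈ Ici a, ENNReal.ofReal (K * s ^ (-q)) ≤ ν {x | s < f x} := by
      intro s hs
      have hs_pos : 0 < s := ha_pos.trans_le hs
      have ht : t₀ ≤ Real.log s := by
        rw [← Real.log_exp t₀]
        exact Real.log_le_log ha_pos hs
      have hval : K * s ^ (-q) = Real.exp (-q * Real.log s + q * t₀) * C := by
        rw [Real.rpow_def_of_pos hs_pos, Real.exp_add, hK_def]
        ring
      rw [hval]
      calc ENNReal.ofReal (Real.exp (-q * Real.log s + q * t₀) * C)
          ≤ ν ({x | Ψ x < ((-(Real.log s) : ℝ) : EReal)} \ N) := keyN _ ht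
        _ ≤ ν {x | s < f x} :=
            measure_mono (lem s (Real.log s) hs_pos.le (Real.exp_log hs_pos).ge)
    have hint2 : IntegrableOn (fun s : ℝ => K * s ^ (-q)) (Ioi a) :=
      (integrableOn_Ioi_rpow_of_lt (by linarith) ha_pos).const_mul K
    have hnn2 : 0 ≤ᵐ[volume.restrict (Ioi a)] fun s : ℝ => K * s ^ (-q) := by
      filter_upwards [ae_restrict_mem measurableSet_Ioi] with s hs
      have hs0 : (0:ℝ) < s := ha_pos.trans hs
      positivity
    have hval2 : ∫ s in Ioi a, K * s ^ (-q) = a * C / (q - 1) := by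
      rw [MeasureTheory.integral_const_mul, integral_Ioi_rpow_of_lt (by linarith) ha_pos]
      have h1 : a ^ (-q + 1 : ℝ) = Real.exp (t₀ * (-q + 1)) := by
        rw [ha_def, Real.rpow_def_of_pos (Real.exp_pos _), Real.log_exp]
      have h2 : Real.exp (q * t₀) * Real.exp (t₀ * (-q + 1)) = Real.exp t₀ := by
        rw [← Real.exp_add]; congr 1; ring
      have h3 : (-q + 1 : ℝ) = -(q - 1) := by ring
      rw [h1, hK_def, h3, neg_div_neg_eq, ha_def, ← h2]
      ring
    calc ENNReal.ofReal (a * C / (q - 1)) = ENNReal.ofReal (∫ s in Ioi a, K * s ^ (-q)) := by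
          rw [hval2]
      _ = ∫⁻ s in Ioi a, ENNReal.ofReal (K * s ^ (-q)) :=
          ofReal_integral_eq_lintegral_ofReal hint2 hnn2
      _ = ∫⁻ s in Ici a, ENNReal.ofReal (K * s ^ (-q)) := by
          rw [Measure.restrict_congr_set Ioi_ae_eq_Ici]
      _ ≤ ∫⁻ s in Ici a, ν {x | s < f x} := setLIntegral_mono' measurableSet_Ici hb
  -- combine
  calc ENNReal.ofReal (q / (q - 1) * Real.exp t₀ * C)
      = ENNReal.ofReal (a * C + a * C / (q - 1)) := by
        have hq1 : q - 1 ≠ 0 := by linarith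
        rw [ha_def]
        congr 1
        field_simp
        ring
    _ ≤ ENNReal.ofReal (a * C) + ENNReal.ofReal (a * C / (q - 1)) := ENNReal.ofReal_add_le
    _ ≤ (∫⁻ s in Ioo (0:ℝ) a, ν {x | s < f x}) + ∫⁻ s in Ici a, ν {x | s < f x} :=
        add_le_add p1 p2
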